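/- On a closed orientable Kähler gradient Ricci shrinker with dim H^{1,1}(M) = 1, the shrinker is linearly unstable unless for a twisted harmonic (1,1)-form ω (i.e. Δ_{f,H} ω = 0) the symmetric tensor S(ω) = ω(J·,·) is a nonzero real multiple of the Ricci tensor. -/

import Mathlib

/-- Abstract model of a closed orientable gradient Ricci shrinker `(M, g, f, τ)`:
`F` is the space of smooth functions, `Ω` the space of 1-forms, `S` the space of
symmetric covariant 2-tensors, together with the weighted differential operators
of Cao–Zhu and the geometric identities satisfied on such a shrinker. -/
structure GradientRicciShrinker (F Ω S : Type*) [AddCommGroup F] [Module ℝ F]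
    [AddCommGroup Ω] [Module ℝ Ω] [AddCommGroup S] [Module ℝ S] where
  /-- the constant `τ > 0` of the shrinker -/
  τ : ℝ
  τ_pos : 0 < τ
  /-- the potential function `f` -/
  f : F
  /-- the constant function `1` -/
  one : F
  /-- the metric tensor `g` -/
  gMet : S
  /-- the Ricci tensor -/
  Ric : S
  /-- the scalar curvature -/
  Rsc : F
  /-- exterior derivative on functions -/
  d : F →ₗ[ℝ] Ω
  /-- weighted divergence `div_f` on 1-forms: `div_f ω = div ω − ω(∇f)` -/
  div1 : Ω →ₗ[ℝ] F
  /-- weighted divergence `div_f` on symmetric 2-tensors -/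
  div2 : S →ₗ[ℝ] Ω
  /-- `div_f^†`, the formal adjoint of `div_f`; `div_f^† ω = −(1/2) L_{#ω} g` -/
  divDag : Ω →ₗ[ℝ] S
  /-- Lie derivative of the metric `ω ↦ L_{#ω} g` -/
  lie : Ω →ₗ[ℝ] S
  /-- Hessian `∇²` -/
  hess : F →ₗ[ℝ] S
  /-- weighted Laplacian `Δ_f = Δ − ∇_{∇f}` on functions -/
  lapF : F →ₗ[ℝ] F
  /-- weighted rough Laplacian `Δ_f = Δ − ∇_{∇f}` on 1-forms -/
  lap1 : Ω →ₗ[ℝ] Ω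
  /-- weighted Lichnerowicz Laplacian `Δ_{f,L} h = Δ_f h + 2Rm(h,−) − (1/τ) h` -/
  lapL : S →ₗ[ℝ] S
  /-- integration against `dm = (4πτ)^{−n/2} e^{−f} dv` -/
  integral : F →ₗ[ℝ] ℝ
  /-- weighted global `L²` inner product on functions -/
  ipF : F →ₗ[ℝ] F →ₗ[ℝ] ℝ
  /-- weighted global `L²` inner product on 1-forms -/
  ipΩ : Ω →ₗ[ℝ] Ω →ₗ[ℝ] ℝ
  /-- weighted global `L²` inner product on symmetric 2-tensors -/
  ipS : S →ₗ[ℝ] S →ₗ[ℝ] ℝ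
  ipF_symm : ∀ a b, ipF a b = ipF b a
  ipΩ_symm : ∀ ω η, ipΩ ω η = ipΩ η ω
  ipS_symm : ∀ h k, ipS h k = ipS k h
  ipS_nonneg : ∀ h, 0 ≤ ipS h h
  ipS_def_pos : ∀ h, h ≠ 0 → 0 < ipS h h
  ipF_nonneg : ∀ a, 0 ≤ ipF a a
  ipΩ_nonneg : ∀ ω, 0 ≤ ipΩ ω ω
  /-- the normalization `∫_M dm = 1` -/
  integral_one : integral one = 1
  /-- the shrinking gradient Ricci soliton equation `Ric + ∇²f = (1/(2τ)) g` -/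
  soliton : Ric + hess f = (1 / (2 * τ)) • gMet
  /-- `div_f^† ω = −(1/2) L_{#ω} g` -/
  divDag_eq : ∀ ω, divDag ω = (-(1/2) : ℝ) • lie ω
  /-- `−d` is the formal adjoint of `div_f` on 1-forms -/
  adj_d : ∀ a ω, ipF (div1 ω) a = - ipΩ ω (d a)
  /-- `div_f^†` is the formal adjoint of `div_f` on symmetric 2-tensors -/
  adj_div2 : ∀ h ω, ipΩ (div2 h) ω = ipS h (divDag ω)
  /-- `Δ_f` is self-adjoint on functions -/
  lapF_selfAdjoint : ∀ a b, ipF (lapF a) b = ipF a (lapF b)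
  /-- `Δ_{f,L}` is self-adjoint -/
  lapL_selfAdjoint : ∀ h k, ipS (lapL h) k = ipS h (lapL k)
  /-- `Δ_{f,L} Ric = 0` -/
  lapL_Ric : lapL Ric = 0
  /-- `div_f Ric = 0` -/
  div2_Ric : div2 Ric = 0
  /-- `∫_M R dm = 2τ ∫_M |Ric|² dm` -/
  intR_eq : integral Rsc = 2 * τ * ipS Ric Ric
  /-- `∫_M R dm > 0` on a nontrivial shrinker -/
  intR_pos : 0 < integral Rsc
  /-- the function `υ_h`, the unique solution of
  `Δ_f υ_h + (1/(2τ)) υ_h = div_f div_f h`, `∫ υ_h dm = 0` -/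
  υ : S →ₗ[ℝ] F
  υ_eq : ∀ h, lapF (υ h) + (1 / (2 * τ)) • υ h = div1 (div2 h)
  υ_mean : ∀ h, integral (υ h) = 0
  υ_unique : ∀ (h : S) (u : F),
    lapF u + (1 / (2 * τ)) • u = div1 (div2 h) → integral u = 0 → u = υ h
  /-- spectral estimate: every nonzero eigenvalue of `Δ_f` on functions
  is strictly less than `−1/(2τ)` -/
  lapF_spec : ∀ (μ : ℝ) (a : F), a ≠ 0 → lapF a = μ • a →
    μ = 0 ∨ μ < -(1 / (2 * τ))
  /-- weighted maximum principle: `Δ_f u = 0` implies `u` is constant -/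
  lapF_max : ∀ a : F, lapF a = 0 → ∃ c : ℝ, a = c • one

namespace GradientRicciShrinker

variable {F Ω S : Type*} [AddCommGroup F] [Module ℝ F]
    [AddCommGroup Ω] [Module ℝ Ω] [AddCommGroup S] [Module ℝ S]

/-- The Cao–Zhu stability operator `N` of the `ν`-entropy:
`N(h) = (1/2)Δ_{f,L} h + (1/(2τ)) h + div_f^† div_f h + (1/2)∇² υ_h
  − Ric (∫⟨Ric,h⟩dm)/(∫R dm)`. -/
noncomputable def N (X : GradientRicciShrinker F Ω S) (h : S) : S :=
  (1 / 2 : ℝ) • X.lapL h + (1 / (2 * X.τ)) • h + X.divDag (X.div2 h)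
    + (1 / 2 : ℝ) • X.hess (X.υ h)
    - (X.ipS X.Ric h / X.integral X.Rsc) • X.Ric

/-- The second variation of the `ν`-entropy in the direction `h`:
`ν''_g(h) = ∫_M ⟨N(h), h⟩ dm`. -/
noncomputable def nuSecond (X : GradientRicciShrinker F Ω S) (h : S) : ℝ :=
  X.ipS (X.N h) h

end GradientRicciShrinker

variable {F Ω S : Type*} [AddCommGroup F] [Module ℝ F]
    [AddCommGroup Ω] [Module ℝ Ω] [AddCommGroup S] [Module ℝ S]

open GradientRicciShrinker

/-- A closed orientable Kähler gradient Ricci shrinker with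
`dim H^{1,1}(M) = 1` is linearly unstable unless for a twisted harmonic
(1,1)-form ω the symmetric tensor `S(ω) = ω(J·,·)` is a nonzero real multiple
of the Ricci tensor. `Sω` below denotes `S(ω)`, which satisfies
`div_f S(ω) = 0` and `Δ_{f,L} S(ω) = 0`. -/
theorem kahler_unstable (X : GradientRicciShrinker F Ω S)
    (Sω : S) (hSne : Sω ≠ 0)
    (hdiv : X.div2 Sω = 0) (hlap : X.lapL Sω = 0)
    (hnotRic : ∀ μ : ℝ, μ ≠ 0 → Sω ≠ μ • X.Ric) :
    0 < X.nuSecond Sω := by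
  have hτ := X.τ_pos
  have hr : 0 < X.ipS X.Ric X.Ric := by
    have h := X.intR_pos; rw [X.intR_eq] at h; nlinarith
  have hυ : X.υ Sω = 0 := by
    refine (X.υ_unique Sω 0 ?_ ?_).symm
    · simp [hdiv]
    · simp
  set b := X.ipS X.Ric Sω with hb
  set r := X.ipS X.Ric X.Ric with hrdef
  set s := X.ipS Sω Sω with hsdef
  have hs : 0 < s := X.ipS_def_pos _ hSne
  have hk : Sω - (b / r) • X.Ric ≠ 0 := by
    intro h
    have h' : Sω = (b / r) • X.Ric := by
      have := sub_eq_zero.mp h; exact this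
    rcases eq_or_ne (b / r) 0 with h0 | h0
    · exact hSne (by simpa [h0] using h')
    · exact hnotRic _ h0 h'
  have hkk : 0 < X.ipS (Sω - (b / r) • X.Ric) (Sω - (b / r) • X.Ric) :=
    X.ipS_def_pos _ hk
  have expand : X.ipS (Sω - (b / r) • X.Ric) (Sω - (b / r) • X.Ric)
      = s - 2 * (b / r) * b + (b / r) ^ 2 * r := by
    have hsymm : X.ipS Sω X.Ric = b := X.ipS_symm Sω X.Ric
    simp only [map_sub, map_smul, LinearMap.sub_apply, LinearMap.smul_apply,
      smul_eq_mul, ← hb, ← hrdef, ← hsdef, hsymm]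
    ring
  have key : b ^ 2 < s * r := by
    rw [expand] at hkk
    have hr' : r ≠ 0 := ne_of_gt hr
    have h2 : 0 < (s - 2 * (b / r) * b + (b / r) ^ 2 * r) * r :=
      mul_pos hkk hr
    have h3 : (s - 2 * (b / r) * b + (b / r) ^ 2 * r) * r = s * r - b ^ 2 := by
      field_simp; ring
    nlinarith [h2, h3]
  have hN : X.N Sω = (1 / (2 * X.τ)) • Sω
      - (b / X.integral X.Rsc) • X.Ric := by
    unfold GradientRicciShrinker.N
    rw [hlap, hdiv, hυ]
    simp
    rfl
  unfold GradientRicciShrinker.nuSecond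
  rw [hN, X.intR_eq]
  have hval : X.ipS ((1 / (2 * X.τ)) • Sω - (b / (2 * X.τ * r)) • X.Ric) Sω
      = (1 / (2 * X.τ)) * s - (b / (2 * X.τ * r)) * b := by
    simp only [map_sub, map_smul, LinearMap.sub_apply, LinearMap.smul_apply,
      smul_eq_mul, ← hb, ← hsdef]
  rw [hval]
  have heq : (1 / (2 * X.τ)) * s - (b / (2 * X.τ * r)) * b
      = (s * r - b ^ 2) / (2 * X.τ * r) := by
    field_simp
  rw [heq]
  exact div_pos (by linarith) (by positivity)
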